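/- Let X be a deck of n = a+b+c cards (a,b,c ≥ 1), let δ ≥ 1, and let 𝒜 be a nonempty announcement that is informative for Bob and satisfies the perfect δ-security condition. Then δ ≤ a − 2c. -/

import Mathlib

open Finset

section Aux

variable {α : Type*} [DecidableEq α]

/-- Counting function: number of members of `ℬ` containing `U` and disjoint from `E`. -/
private def Gcnt (ℬ : Finset (Finset α)) (E U : Finset α) : ℕ :=
  (ℬ.filter fun H => U ⊆ H ∧ Disjoint H E).card

private lemma Gcnt_split (ℬ : Finset (Finset α)) (E U : Finset α) (u : α) :
    Gcnt ℬ E U = Gcnt ℬ (insert u E) U + Gcnt ℬ E (insert u U) := by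
  classical
  have hpart := Finset.card_filter_add_card_filter_not
      (p := fun H : Finset α => u ∈ H) (s := ℬ.filter fun H => U ⊆ H ∧ Disjoint H E)
  rw [Finset.filter_filter, Finset.filter_filter] at hpart
  have h1 : (ℬ.filter fun a => (U ⊆ a ∧ Disjoint a E) ∧ u ∈ a)
      = ℬ.filter fun H => insert u U ⊆ H ∧ Disjoint H E := by
    apply Finset.filter_congr
    intro H _
    simp only [Finset.insert_subset_iff]
    tauto
  have h2 : (ℬ.filter fun a => (U ⊆ a ∧ Disjoint a E) ∧ ¬ u ∈ a)
      = ℬ.filter fun H => U ⊆ H ∧ Disjoint H (insert u E) := by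
    apply Finset.filter_congr
    intro H _
    simp only [Finset.disjoint_insert_right]
    tauto
  rw [h1, h2] at hpart
  unfold Gcnt
  omega

/-- If every hand meets `V` in exactly `s` elements and the number of hands avoiding any
`c`-subset of `V` is a constant `k`, then the number of hands containing a given `c`-subset
of `V` is also constant. -/
private lemma cascade (V : Finset α) (ℬ : Finset (Finset α)) (c s k : ℕ)
    (hs : ∀ H ∈ ℬ, (H ∩ V).card = s)
    (hconst : ∀ C, C ⊆ V → C.card = c → (ℬ.filter fun H => Disjoint H C).card = k)
    (hVs : s + c ≤ V.card) :
    ∀ U, U ⊆ V → U.card = c → ∀ U', U' ⊆ V → U'.card = c →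
      (ℬ.filter fun H => U ⊆ H).card = (ℬ.filter fun H => U' ⊆ H).card := by
  classical
  have hcV : c ≤ V.card := le_trans (Nat.le_add_left c s) hVs
  have main : ∀ d, d ≤ c → ∃ γ : ℕ → ℕ, ∀ i, i ≤ d → ∀ E U : Finset α,
      E ⊆ V → U ⊆ V → Disjoint E U → E.card = c - d → U.card = i →
      Gcnt ℬ E U = γ i := by
    intro d
    induction d with
    | zero =>
      intro _
      refine ⟨fun _ => k, ?_⟩
      intro i hi E U hE hU _ hEc hUc
      have hU0 : U = ∅ := Finset.card_eq_zero.mp (by omega)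
      subst hU0
      unfold Gcnt
      have heq : (ℬ.filter fun H => (∅ : Finset α) ⊆ H ∧ Disjoint H E)
          = ℬ.filter fun H => Disjoint H E := by
        apply Finset.filter_congr
        intro H _
        simp
      rw [heq]
      exact hconst E hE (by omega)
    | succ d ih =>
      intro hdc
      obtain ⟨γ, hγ⟩ := ih (by omega)
      set e := c - (d + 1) with he_def
      have he1 : e + 1 = c - d := by omega
      have hed : e + (d + 1) = c := by omega
      -- Step 2 : adding a point to U
      have hS2 : ∀ i, i ≤ d → ∀ E U : Finset α, ∀ u : α,
          E ⊆ V → U ⊆ V → Disjoint E U → E.card = e → U.card = i →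
          u ∈ V → u ∉ E → u ∉ U →
          Gcnt ℬ E U = γ i + Gcnt ℬ E (insert u U) := by
        intro i hi E U u hE hU hdisj hEc hUc huV huE huU
        have hsplit := Gcnt_split ℬ E U u
        have hval : Gcnt ℬ (insert u E) U = γ i := by
          apply hγ i hi (insert u E) U
          · exact Finset.insert_subset huV hE
          · exact hU
          · rw [Finset.disjoint_insert_left]; exact ⟨huU, hdisj⟩
          · rw [Finset.card_insert_of_notMem huE, hEc, he1]
          · exact hUc
        omega
      -- Step 3 : value independent of U (for fixed E)
      have hS3 : ∀ i, i ≤ d + 1 → ∀ E : Finset α, E ⊆ V → E.card = e →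
          ∀ U U' : Finset α, U ⊆ V → U' ⊆ V → Disjoint E U → Disjoint E U' →
          U.card = i → U'.card = i → Gcnt ℬ E U = Gcnt ℬ E U' := by
        intro i
        induction i with
        | zero =>
          intro _ E _ _ U U' _ _ _ _ hUc hU'c
          rw [Finset.card_eq_zero.mp hUc, Finset.card_eq_zero.mp hU'c]
        | succ i ihi =>
          intro hi E hE hEc U U' hU hU' hdU hdU' hUc hU'c
          obtain ⟨u, hu⟩ := Finset.card_pos.mp (by omega : 0 < U.card)
          obtain ⟨u', hu'⟩ := Finset.card_pos.mp (by omega : 0 < U'.card)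
          have h1 : Gcnt ℬ E (U.erase u) = γ i + Gcnt ℬ E U := by
            have := hS2 i (by omega) E (U.erase u) u hE
              ((Finset.erase_subset _ _).trans hU)
              (Finset.disjoint_of_subset_right (Finset.erase_subset _ _) hdU)
              hEc (by rw [Finset.card_erase_of_mem hu, hUc]; omega)
              (hU hu) (Finset.disjoint_right.mp hdU hu) (Finset.notMem_erase u U)
            rwa [Finset.insert_erase hu] at this
          have h2 : Gcnt ℬ E (U'.erase u') = γ i + Gcnt ℬ E U' := by
            have := hS2 i (by omega) E (U'.erase u') u' hE
              ((Finset.erase_subset _ _).trans hU')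
              (Finset.disjoint_of_subset_right (Finset.erase_subset _ _) hdU')
              hEc (by rw [Finset.card_erase_of_mem hu', hU'c]; omega)
              (hU' hu') (Finset.disjoint_right.mp hdU' hu') (Finset.notMem_erase u' U')
            rwa [Finset.insert_erase hu'] at this
          have h3 : Gcnt ℬ E (U.erase u) = Gcnt ℬ E (U'.erase u') := by
            apply ihi (by omega) E hE hEc
            · exact (Finset.erase_subset _ _).trans hU
            · exact (Finset.erase_subset _ _).trans hU'
            · exact Finset.disjoint_of_subset_right (Finset.erase_subset _ _) hdU
            · exact Finset.disjoint_of_subset_right (Finset.erase_subset _ _) hdU'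
            · rw [Finset.card_erase_of_mem hu, hUc]; omega
            · rw [Finset.card_erase_of_mem hu', hU'c]; omega
          omega
      -- Step Q : telescoping down to a (d+1)-set
      have hQ : ∀ m i, i + m = d + 1 → ∀ E U U₁ : Finset α,
          E ⊆ V → E.card = e → U ⊆ V → Disjoint E U → U.card = i →
          U₁ ⊆ V → Disjoint E U₁ → U₁.card = d + 1 →
          Gcnt ℬ E U = (∑ t ∈ Finset.Ico i (d + 1), γ t) + Gcnt ℬ E U₁ := by
        intro m
        induction m with
        | zero =>
          intro i hi E U U₁ hE hEc hU hdU hUc hU₁ hdU₁ hU₁c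
          have : i = d + 1 := by omega
          subst this
          rw [Finset.Ico_self, Finset.sum_empty, zero_add]
          exact hS3 (d + 1) le_rfl E hE hEc U U₁ hU hU₁ hdU hdU₁ hUc hU₁c
        | succ m ihm =>
          intro i hi E U U₁ hE hEc hU hdU hUc hU₁ hdU₁ hU₁c
          have hiled : i ≤ d := by omega
          have hpick : (V \ (E ∪ U)).Nonempty := by
            rw [← Finset.card_pos, Finset.card_sdiff_of_subset (Finset.union_subset hE hU)]
            have h1 : (E ∪ U).card ≤ e + i := by
              calc (E ∪ U).card ≤ E.card + U.card := Finset.card_union_le E U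
              _ = e + i := by rw [hEc, hUc]
            omega
          obtain ⟨u, hu⟩ := hpick
          rw [Finset.mem_sdiff, Finset.mem_union] at hu
          push_neg at hu
          have huV : u ∈ V := hu.1
          have huE : u ∉ E := hu.2.1
          have huU : u ∉ U := hu.2.2
          have step := hS2 i hiled E U u hE hU hdU hEc hUc huV huE huU
          have hrec := ihm (i + 1) (by omega) E (insert u U) U₁ hE hEc
            (Finset.insert_subset huV hU)
            (by rw [Finset.disjoint_insert_right]; exact ⟨huE, hdU⟩)
            (by rw [Finset.card_insert_of_notMem huU, hUc])
            hU₁ hdU₁ hU₁c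
          have hsum : (∑ t ∈ Finset.Ico i (d + 1), γ t)
              = γ i + ∑ t ∈ Finset.Ico (i + 1) (d + 1), γ t :=
            Finset.sum_eq_sum_Ico_succ_bot (by omega) γ
          omega
      -- Step 5 : double counting
      have hdc : ∀ E : Finset α, E ⊆ V →
          (∑ U ∈ (V \ E).powersetCard (d + 1), Gcnt ℬ E U)
            = Gcnt ℬ E ∅ * s.choose (d + 1) := by
        intro E hE
        unfold Gcnt
        simp only [Finset.card_filter]
        rw [Finset.sum_comm]
        have inner : ∀ H ∈ ℬ,
            (∑ U ∈ (V \ E).powersetCard (d + 1),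
              if U ⊆ H ∧ Disjoint H E then 1 else 0)
            = if (∅ : Finset α) ⊆ H ∧ Disjoint H E then s.choose (d + 1) else 0 := by
          intro H hH
          by_cases hd : Disjoint H E
          · simp only [hd, and_true, Finset.empty_subset, true_and, if_true]
            rw [← Finset.card_filter]
            have hset : ((V \ E).powersetCard (d + 1)).filter (fun U => U ⊆ H)
                = ((V \ E) ∩ H).powersetCard (d + 1) := by
              ext U
              simp only [Finset.mem_filter, Finset.mem_powersetCard,
                Finset.subset_inter_iff]
              tauto
            rw [hset, Finset.card_powersetCard]
            congr 1
            have h1 : (V \ E) ∩ H = V ∩ H := by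
              ext x
              simp only [Finset.mem_inter, Finset.mem_sdiff]
              constructor
              · tauto
              · intro hx
                exact ⟨⟨hx.1, Finset.disjoint_left.mp hd hx.2⟩, hx.2⟩
            rw [h1, Finset.inter_comm]
            exact hs H hH
          · simp [hd]
        rw [Finset.sum_congr rfl inner]
        rw [Finset.sum_ite, Finset.sum_const, Finset.sum_const]
        simp [mul_comm]
      -- uniform value of #[(V\E).powersetCard (d+1)]
      have hApos : 0 < (V.card - e).choose (d + 1) :=
        Nat.choose_pos (by omega)
      have hBA : s.choose (d + 1) < (V.card - e).choose (d + 1)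
          ∨ s.choose (d + 1) = 0 := by
        by_cases hsd : d + 1 ≤ s
        · left
          have hstep : (s + 1).choose (d + 1) = s.choose d + s.choose (d + 1) :=
            Nat.choose_succ_succ s d
          have hpos : 0 < s.choose d := Nat.choose_pos (show d ≤ s by omega)
          calc s.choose (d + 1) < (s + 1).choose (d + 1) := by omega
          _ ≤ (V.card - e).choose (d + 1) := Nat.choose_le_choose _ (by omega)
        · right
          exact Nat.choose_eq_zero_of_lt (by omega)
      -- uniqueness helper
      have huniq : ∀ x y K : ℕ,
          (V.card - e).choose (d + 1) * x = (K + x) * s.choose (d + 1) →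
          (V.card - e).choose (d + 1) * y = (K + y) * s.choose (d + 1) →
          x = y := by
        intro x y K hx hy
        rcases hBA with hlt | hzero
        · have hx' : ((V.card - e).choose (d + 1) - s.choose (d + 1) : ℤ) * x
              = K * s.choose (d + 1) := by
            push_cast at hx ⊢
            ring_nf
            ring_nf at hx
            linarith
          have hy' : ((V.card - e).choose (d + 1) - s.choose (d + 1) : ℤ) * y
              = K * s.choose (d + 1) := by
            push_cast at hy ⊢
            ring_nf
            ring_nf at hy
            linarith
          have hne : ((V.card - e).choose (d + 1) - s.choose (d + 1) : ℤ) ≠ 0 := by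
            have : (s.choose (d + 1) : ℤ) < (V.card - e).choose (d + 1) := by
              exact_mod_cast hlt
            omega
          have := mul_left_cancel₀ hne (hx'.trans hy'.symm)
          exact_mod_cast this
        · rw [hzero, mul_zero] at hx hy
          rcases Nat.mul_eq_zero.mp hx with h | h
          · omega
          · rcases Nat.mul_eq_zero.mp hy with h' | h'
            · omega
            · omega
      -- fixed reference pair
      obtain ⟨Estar, hEstarV, hEstarc⟩ := Finset.exists_subset_card_eq (s := V) (n := e) (by omega)
      obtain ⟨Ustar, hUstarVE, hUstarc⟩ :=
        Finset.exists_subset_card_eq (s := (V \ Estar)) (n := (d + 1))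
          (by rw [Finset.card_sdiff_of_subset hEstarV, hEstarc]; omega)
      set g := Gcnt ℬ Estar Ustar with hg_def
      set K := ∑ t ∈ Finset.Ico 0 (d + 1), γ t with hK_def
      -- the key equation holds for any suitable E with any (d+1)-subset of V \ E
      have hkey : ∀ E U₁ : Finset α, E ⊆ V → E.card = e →
          U₁ ⊆ V \ E → U₁.card = d + 1 →
          (V.card - e).choose (d + 1) * Gcnt ℬ E U₁
            = (K + Gcnt ℬ E U₁) * s.choose (d + 1) := by
        intro E U₁ hE hEc hU₁ hU₁c
        have hU₁V : U₁ ⊆ V := hU₁.trans (Finset.sdiff_subset)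
        have hdU₁ : Disjoint E U₁ :=
          (Finset.disjoint_of_subset_left hU₁ Finset.sdiff_disjoint).symm
        -- all terms in the double count equal Gcnt ℬ E U₁
        have hterms : ∀ U ∈ (V \ E).powersetCard (d + 1), Gcnt ℬ E U = Gcnt ℬ E U₁ := by
          intro U hU
          rw [Finset.mem_powersetCard] at hU
          exact hS3 (d + 1) le_rfl E hE hEc U U₁
            (hU.1.trans Finset.sdiff_subset) hU₁V
            ((Finset.disjoint_of_subset_left hU.1 Finset.sdiff_disjoint).symm)
            hdU₁ hU.2 hU₁c
        have hconstsum : (∑ U ∈ (V \ E).powersetCard (d + 1), Gcnt ℬ E U)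
            = (V.card - e).choose (d + 1) * Gcnt ℬ E U₁ := by
          rw [Finset.sum_congr rfl hterms, Finset.sum_const,
            Finset.card_powersetCard, Finset.card_sdiff_of_subset hE, hEc, smul_eq_mul]
        have hzero : Gcnt ℬ E ∅ = K + Gcnt ℬ E U₁ := by
          have := hQ (d + 1) 0 (by omega) E ∅ U₁ hE hEc (Finset.empty_subset V)
            (Finset.disjoint_empty_right E) (Finset.card_empty) hU₁V hdU₁ hU₁c
          rw [this, hK_def]
        rw [← hconstsum, hdc E hE, hzero]
      have hgstar := hkey Estar Ustar hEstarV hEstarc hUstarVE hUstarc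
      refine ⟨fun i => (∑ t ∈ Finset.Ico i (d + 1), γ t) + g, ?_⟩
      intro i hi E U hE hU hdisj hEc hUc
      obtain ⟨U₁, hU₁VE, hU₁c⟩ :=
        Finset.exists_subset_card_eq (s := (V \ E)) (n := (d + 1))
          (by rw [Finset.card_sdiff_of_subset hE, hEc]; omega)
      have hU₁V : U₁ ⊆ V := hU₁VE.trans Finset.sdiff_subset
      have hdU₁ : Disjoint E U₁ :=
        (Finset.disjoint_of_subset_left hU₁VE Finset.sdiff_disjoint).symm
      have hQ' := hQ (d + 1 - i) i (by omega) E U U₁ hE hEc hU hdisj hUc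
        hU₁V hdU₁ hU₁c
      have hgE := huniq (Gcnt ℬ E U₁) g K (hkey E U₁ hE hEc hU₁VE hU₁c) hgstar
      rw [hQ', hgE]
  -- conclude
  obtain ⟨γ, hγ⟩ := main c le_rfl
  intro U hUV hUc U' hU'V hU'c
  have h1 : Gcnt ℬ ∅ U = γ c := by
    apply hγ c le_rfl ∅ U (Finset.empty_subset V) hUV
      (Finset.disjoint_empty_left U) (by simp) hUc
  have h2 : Gcnt ℬ ∅ U' = γ c := by
    apply hγ c le_rfl ∅ U' (Finset.empty_subset V) hU'V
      (Finset.disjoint_empty_left U') (by simp) hU'c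
  have e1 : (ℬ.filter fun H => U ⊆ H).card = Gcnt ℬ ∅ U := by
    unfold Gcnt; congr 1; apply Finset.filter_congr; intro H _; simp
  have e2 : (ℬ.filter fun H => U' ⊆ H).card = Gcnt ℬ ∅ U' := by
    unfold Gcnt; congr 1; apply Finset.filter_congr; intro H _; simp
  rw [e1, e2, h1, h2]

end Aux

/-- Corollary: a nonempty announcement that is informative for Bob and perfectly
`δ`-secure against Cathy satisfies `δ ≤ a - 2c` (i.e. `δ + 2c ≤ a`). -/
theorem stmt_13 {α : Type*} [DecidableEq α] (X : Finset α) (a b c δ : ℕ)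
    (ha : 1 ≤ a) (hb : 1 ≤ b) (hc : 1 ≤ c) (hδ : 1 ≤ δ)
    (hX : X.card = a + b + c)
    (𝒜 : Finset (Finset α))
    (hhands : ∀ H ∈ 𝒜, H ⊆ X ∧ H.card = a)
    (hne : 𝒜.Nonempty)
    (hinf : ∀ HB ⊆ X, HB.card = b →
      ∀ H ∈ 𝒜, ∀ H' ∈ 𝒜, Disjoint H HB → Disjoint H' HB → H = H')
    (hsec : ∀ HC ⊆ X, HC.card = c →
      (𝒜.filter fun H => Disjoint H HC).Nonempty →
      ∀ Y ⊆ X \ HC, Y.Nonempty → Y.card ≤ δ →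
        (a + b).choose Y.card *
            (((𝒜.filter fun H => Disjoint H HC)).filter fun H => Y ⊆ H).card =
          a.choose Y.card * (𝒜.filter fun H => Disjoint H HC).card) :
    δ + 2 * c ≤ a := by
  classical
  -- Any two distinct hands intersect in at most a - c - 1 cards.
  have pair : ∀ H ∈ 𝒜, ∀ H' ∈ 𝒜, H ≠ H' → (H ∩ H').card + c + 1 ≤ a := by
    intro H hH H' hH' hneq
    by_contra hcon
    obtain ⟨hHX, hHa⟩ := hhands H hH
    obtain ⟨hH'X, hH'a⟩ := hhands H' hH'
    have hui : (H ∪ H').card + (H ∩ H').card = a + a := by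
      rw [Finset.card_union_add_card_inter, hHa, hH'a]
    have hsub : H ∪ H' ⊆ X := Finset.union_subset hHX hH'X
    have hbB : b ≤ (X \ (H ∪ H')).card := by
      rw [Finset.card_sdiff_of_subset hsub, hX]; omega
    obtain ⟨B, hBsub, hBcard⟩ := Finset.exists_subset_card_eq (n := b) hbB
    have hdisj : Disjoint (H ∪ H') B :=
      (Finset.disjoint_of_subset_left hBsub Finset.sdiff_disjoint).symm
    exact hneq (hinf B (hBsub.trans Finset.sdiff_subset) hBcard H hH H' hH'
      (hdisj.mono_left Finset.subset_union_left)
      (hdisj.mono_left Finset.subset_union_right))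
  -- Point counts from the security condition with a singleton.
  have point : ∀ C : Finset α, C ⊆ X → C.card = c →
      (𝒜.filter fun H => Disjoint H C).Nonempty → ∀ z ∈ X, z ∉ C →
      (a + b) * ((𝒜.filter fun H => Disjoint H C).filter fun H => z ∈ H).card
        = a * (𝒜.filter fun H => Disjoint H C).card := by
    intro C hCX hCc hPne z hzX hzC
    have hs := hsec C hCX hCc hPne {z}
      (by rw [Finset.singleton_subset_iff, Finset.mem_sdiff]; exact ⟨hzX, hzC⟩)
      (Finset.singleton_nonempty z) (by simpa using hδ)
    simpa [Nat.choose_one_right, Finset.singleton_subset_iff] using hs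
  -- Counts of hands avoiding C together with one extra card.
  have avoid : ∀ C : Finset α, C ⊆ X → C.card = c →
      (𝒜.filter fun H => Disjoint H C).Nonempty → ∀ z ∈ X, z ∉ C →
      (a + b) * (𝒜.filter fun H => Disjoint H (insert z C)).card
        = b * (𝒜.filter fun H => Disjoint H C).card := by
    intro C hCX hCc hPne z hzX hzC
    have hpt := point C hCX hCc hPne z hzX hzC
    have hpart := Finset.card_filter_add_card_filter_not
      (p := fun H : Finset α => z ∈ H) (s := 𝒜.filter fun H => Disjoint H C)
    have heq : ((𝒜.filter fun H => Disjoint H C).filter fun H => ¬ z ∈ H)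
        = 𝒜.filter fun H => Disjoint H (insert z C) := by
      rw [Finset.filter_filter]
      apply Finset.filter_congr
      intro H _
      simp only [Finset.disjoint_insert_right]
      tauto
    rw [heq] at hpart
    have h1 : (a + b) * ((𝒜.filter fun H => Disjoint H C).filter fun H => z ∈ H).card
        + (a + b) * (𝒜.filter fun H => Disjoint H (insert z C)).card
        = (a + b) * (𝒜.filter fun H => Disjoint H C).card := by
      rw [← Nat.mul_add, hpart]
    have h2 : (a + b) * (𝒜.filter fun H => Disjoint H C).card
        = a * (𝒜.filter fun H => Disjoint H C).card
          + b * (𝒜.filter fun H => Disjoint H C).card := by ring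
    linarith
  -- The swap step: replacing one card of Cathy's hand.
  have swap : ∀ C : Finset α, C ⊆ X → C.card = c →
      (𝒜.filter fun H => Disjoint H C).Nonempty → ∀ x ∈ C, ∀ x' ∈ X, x' ∉ C →
      ((𝒜.filter fun H => Disjoint H (insert x' (C.erase x))).Nonempty ∧
       (𝒜.filter fun H => Disjoint H (insert x' (C.erase x))).card
         = (𝒜.filter fun H => Disjoint H C).card) := by
    intro C hCX hCc hPne x hx x' hx'X hx'C
    have hxx' : x ≠ x' := fun h => hx'C (h ▸ hx)
    have hxX : x ∈ X := hCX hx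
    have hkey : insert x (insert x' (C.erase x)) = insert x' C := by
      rw [Finset.insert_comm, Finset.insert_erase hx]
    have hC'X : insert x' (C.erase x) ⊆ X :=
      Finset.insert_subset hx'X ((Finset.erase_subset _ _).trans hCX)
    have hC'c : (insert x' (C.erase x)).card = c := by
      rw [Finset.card_insert_of_notMem
        (fun hmem => hx'C (Finset.erase_subset _ _ hmem)),
        Finset.card_erase_of_mem hx, hCc]
      omega
    have h1 := avoid C hCX hCc hPne x' hx'X hx'C
    have hppos : 0 < (𝒜.filter fun H => Disjoint H C).card := Finset.card_pos.mpr hPne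
    have hQpos : 0 < (𝒜.filter fun H => Disjoint H (insert x' C)).card := by
      rcases Nat.eq_zero_or_pos (𝒜.filter fun H => Disjoint H (insert x' C)).card with h | h
      · rw [h, Nat.mul_zero] at h1
        have := Nat.mul_pos hb hppos
        omega
      · exact h
    have hsubfilters : (𝒜.filter fun H => Disjoint H (insert x' C))
        ⊆ 𝒜.filter fun H => Disjoint H (insert x' (C.erase x)) := by
      intro H hH
      rw [Finset.mem_filter] at hH ⊢
      refine ⟨hH.1, Finset.disjoint_of_subset_right ?_ hH.2⟩
      exact Finset.insert_subset_insert _ (Finset.erase_subset _ _)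
    have hP'ne : (𝒜.filter fun H => Disjoint H (insert x' (C.erase x))).Nonempty := by
      obtain ⟨H, hH⟩ := Finset.card_pos.mp hQpos
      exact ⟨H, hsubfilters hH⟩
    have hxnotC' : x ∉ insert x' (C.erase x) := by
      rw [Finset.mem_insert]
      rintro (h | h)
      · exact hxx' h
      · exact Finset.notMem_erase x C h
    have h2 := avoid (insert x' (C.erase x)) hC'X hC'c hP'ne x hxX hxnotC'
    rw [hkey] at h2
    have hbb : b * (𝒜.filter fun H => Disjoint H (insert x' (C.erase x))).card
        = b * (𝒜.filter fun H => Disjoint H C).card := by rw [← h1, ← h2]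
    have hcards := Nat.eq_of_mul_eq_mul_left hb hbb
    exact ⟨hP'ne, hcards⟩
  -- Constancy of the number of hands avoiding any Cathy hand.
  have const : ∀ n : ℕ, ∀ C₁ C₂ : Finset α, C₁ ⊆ X → C₂ ⊆ X → C₁.card = c →
      C₂.card = c → (𝒜.filter fun H => Disjoint H C₁).Nonempty → (C₂ \ C₁).card = n →
      ((𝒜.filter fun H => Disjoint H C₂).Nonempty ∧
       (𝒜.filter fun H => Disjoint H C₂).card = (𝒜.filter fun H => Disjoint H C₁).card) := by
    intro n
    induction n with
    | zero =>
      intro C₁ C₂ h1 h2 hc1 hc2 hne1 hsd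
      have hsub : C₂ ⊆ C₁ := by
        rw [← Finset.sdiff_eq_empty_iff_subset]
        exact Finset.card_eq_zero.mp hsd
      have heq : C₂ = C₁ := Finset.eq_of_subset_of_card_le hsub (by omega)
      rw [heq]
      exact ⟨hne1, rfl⟩
    | succ n ihn =>
      intro C₁ C₂ hC₁X hC₂X hc1 hc2 hne1 hsd
      have hx'ex : (C₂ \ C₁).Nonempty := by
        rw [← Finset.card_pos, hsd]; omega
      obtain ⟨x', hx'sd⟩ := hx'ex
      have hxex : (C₁ \ C₂).Nonempty := by
        rw [← Finset.card_pos, Finset.card_sdiff_comm (by omega : C₁.card = C₂.card), hsd]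
        omega
      obtain ⟨x, hxsd⟩ := hxex
      have hx'mem := Finset.mem_sdiff.mp hx'sd
      have hxmem := Finset.mem_sdiff.mp hxsd
      have hswap := swap C₁ hC₁X hc1 hne1 x hxmem.1 x' (hC₂X hx'mem.1) hx'mem.2
      have hC₁'X : insert x' (C₁.erase x) ⊆ X :=
        Finset.insert_subset (hC₂X hx'mem.1) ((Finset.erase_subset _ _).trans hC₁X)
      have hC₁'c : (insert x' (C₁.erase x)).card = c := by
        rw [Finset.card_insert_of_notMem
          (fun hmem => hx'mem.2 (Finset.erase_subset _ _ hmem)),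
          Finset.card_erase_of_mem hxmem.1, hc1]
        have : 0 < c := by omega
        omega
      have hsdnew : C₂ \ insert x' (C₁.erase x) = (C₂ \ C₁).erase x' := by
        ext z
        simp only [Finset.mem_sdiff, Finset.mem_erase, Finset.mem_insert]
        constructor
        · rintro ⟨hz2, hz⟩
          have hzx : z ≠ x := fun h => hxmem.2 (h ▸ hz2)
          push_neg at hz
          exact ⟨hz.1, hz2, fun hzC₁ => (hz.2 hzx) hzC₁⟩
        · rintro ⟨hzx', hz2, hznC₁⟩
          exact ⟨hz2, fun h => h.elim hzx' (fun h' => hznC₁ h'.2)⟩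
      have hcard' : (C₂ \ insert x' (C₁.erase x)).card = n := by
        rw [hsdnew, Finset.card_erase_of_mem hx'sd, hsd]
        omega
      obtain ⟨hne', heq'⟩ := hswap
      obtain ⟨hne2, heq2⟩ := ihn (insert x' (C₁.erase x)) C₂ hC₁'X hC₂X hC₁'c hc2 hne' hcard'
      exact ⟨hne2, by rw [heq2, heq']⟩
  -- Setup: a hand and a reference Cathy hand.
  obtain ⟨H₁, hH₁⟩ := hne
  obtain ⟨hH₁X, hH₁a⟩ := hhands H₁ hH₁
  have hXH₁ : (X \ H₁).card = b + c := by
    rw [Finset.card_sdiff_of_subset hH₁X, hX, hH₁a]; omega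
  obtain ⟨C₀, hC₀sub, hC₀c⟩ := Finset.exists_subset_card_eq (s := (X \ H₁)) (n := c) (by omega)
  have hC₀X : C₀ ⊆ X := hC₀sub.trans Finset.sdiff_subset
  have hPne₀ : (𝒜.filter fun H => Disjoint H C₀).Nonempty :=
    ⟨H₁, Finset.mem_filter.mpr ⟨hH₁,
      (Finset.disjoint_of_subset_left hC₀sub Finset.sdiff_disjoint).symm⟩⟩
  have hp₀pos : 0 < (𝒜.filter fun H => Disjoint H C₀).card := Finset.card_pos.mpr hPne₀
  have hgood : ∀ C : Finset α, C ⊆ X → C.card = c →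
      ((𝒜.filter fun H => Disjoint H C).Nonempty ∧
       (𝒜.filter fun H => Disjoint H C).card = (𝒜.filter fun H => Disjoint H C₀).card) :=
    fun C hCX hCc => const (C \ C₀).card C₀ C hC₀X hCX hC₀c hCc hPne₀ rfl
  -- There are at least two hands, hence a ≥ c + 1.
  have hac1 : c + 1 ≤ a := by
    have hpick : (X \ (H₁ ∪ C₀)).Nonempty := by
      rw [← Finset.card_pos, Finset.card_sdiff_of_subset (Finset.union_subset hH₁X hC₀X)]
      have h3 := Finset.card_union_le H₁ C₀
      omega
    obtain ⟨x', hx'⟩ := hpick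
    rw [Finset.mem_sdiff, Finset.mem_union] at hx'
    push_neg at hx'
    have hpt := point C₀ hC₀X hC₀c hPne₀ x' hx'.1 hx'.2.2
    have hpos : 0 < ((𝒜.filter fun H => Disjoint H C₀).filter fun H => x' ∈ H).card := by
      rcases Nat.eq_zero_or_pos ((𝒜.filter fun H => Disjoint H C₀).filter fun H => x' ∈ H).card with h | h
      · rw [h, Nat.mul_zero] at hpt
        have := Nat.mul_pos ha hp₀pos
        omega
      · exact h
    obtain ⟨H₂, hH₂mem⟩ := Finset.card_pos.mp hpos
    rw [Finset.mem_filter] at hH₂mem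
    have hH₂A : H₂ ∈ 𝒜 := (Finset.mem_filter.mp hH₂mem.1).1
    have hne12 : H₁ ≠ H₂ := fun h => hx'.2.1 (h ▸ hH₂mem.2)
    have := pair H₁ hH₁ H₂ hH₂A hne12
    omega
  -- Step A : δ ≤ a - c - 1.
  have hδa : δ + c + 1 ≤ a := by
    obtain ⟨C₂, hC₂sub, hC₂c⟩ := Finset.exists_subset_card_eq (s := H₁) (n := c) (by omega)
    have hC₂X : C₂ ⊆ X := hC₂sub.trans hH₁X
    obtain ⟨hPne₂, _⟩ := hgood C₂ hC₂X hC₂c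
    obtain ⟨Y, hYsub, hYc⟩ := Finset.exists_subset_card_eq (s := (H₁ \ C₂)) (n := (min δ (a - c)))
      (by rw [Finset.card_sdiff_of_subset hC₂sub, hH₁a, hC₂c]; omega)
    have hYX : Y ⊆ X \ C₂ := by
      intro z hz
      have hz' := Finset.mem_sdiff.mp (hYsub hz)
      exact Finset.mem_sdiff.mpr ⟨hH₁X hz'.1, hz'.2⟩
    have hYne : Y.Nonempty := by
      rw [← Finset.card_pos, hYc]; omega
    have hsec2 := hsec C₂ hC₂X hC₂c hPne₂ Y hYX hYne (by rw [hYc]; omega)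
    have hchoosepos : 0 < a.choose Y.card := Nat.choose_pos (by rw [hYc]; omega)
    have hp₂pos : 0 < (𝒜.filter fun H => Disjoint H C₂).card := Finset.card_pos.mpr hPne₂
    have hcntpos : 0 < ((𝒜.filter fun H => Disjoint H C₂).filter fun H => Y ⊆ H).card := by
      rcases Nat.eq_zero_or_pos ((𝒜.filter fun H => Disjoint H C₂).filter fun H => Y ⊆ H).card with h | h
      · rw [h, Nat.mul_zero] at hsec2
        have := Nat.mul_pos hchoosepos hp₂pos
        omega
      · exact h
    obtain ⟨H₃, hH₃⟩ := Finset.card_pos.mp hcntpos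
    rw [Finset.mem_filter] at hH₃
    have hH₃A : H₃ ∈ 𝒜 := (Finset.mem_filter.mp hH₃.1).1
    have hH₃dis : Disjoint H₃ C₂ := (Finset.mem_filter.mp hH₃.1).2
    have hC₂ne : C₂.Nonempty := by
      rw [← Finset.card_pos, hC₂c]; omega
    obtain ⟨w, hw⟩ := hC₂ne
    have hne13 : H₁ ≠ H₃ := by
      intro h
      exact (Finset.disjoint_left.mp hH₃dis (h ▸ hC₂sub hw)) hw
    have hpair := pair H₁ hH₁ H₃ hH₃A hne13
    have hYsub13 : Y ⊆ H₁ ∩ H₃ := fun z hz =>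
      Finset.mem_inter.mpr ⟨(Finset.mem_sdiff.mp (hYsub hz)).1, hH₃.2 hz⟩
    have hYle := Finset.card_le_card hYsub13
    rw [hYc] at hYle
    omega
  -- The reduced family.
  obtain ⟨Y₀, hY₀sub, hY₀c⟩ := Finset.exists_subset_card_eq (s := H₁) (n := δ) (by omega)
  have hY₀X : Y₀ ⊆ X := hY₀sub.trans hH₁X
  have hVcard : (X \ Y₀).card = a + b + c - δ := by
    rw [Finset.card_sdiff_of_subset hY₀X, hX, hY₀c]
  have hsize : ∀ H ∈ 𝒜.filter (fun H => Y₀ ⊆ H), (H ∩ (X \ Y₀)).card = a - δ := by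
    intro H hH
    rw [Finset.mem_filter] at hH
    obtain ⟨hHA, hHY⟩ := hH
    obtain ⟨hHX, hHa⟩ := hhands H hHA
    have hinterV : H ∩ (X \ Y₀) = H \ Y₀ := by
      ext z
      simp only [Finset.mem_inter, Finset.mem_sdiff]
      constructor
      · rintro ⟨h1, _, h3⟩; exact ⟨h1, h3⟩
      · rintro ⟨h1, h2⟩; exact ⟨h1, hHX h1, h2⟩
    rw [hinterV, Finset.card_sdiff_of_subset hHY, hHa, hY₀c]
  have hBfc : ∀ C : Finset α, C ⊆ X \ Y₀ → C.card = c →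
      (a + b).choose δ * ((𝒜.filter (fun H => Y₀ ⊆ H)).filter fun H => Disjoint H C).card
        = a.choose δ * (𝒜.filter fun H => Disjoint H C₀).card := by
    intro C hCV hCc
    have hCX : C ⊆ X := hCV.trans Finset.sdiff_subset
    obtain ⟨hPneC, hpC⟩ := hgood C hCX hCc
    have hYXC : Y₀ ⊆ X \ C := by
      intro z hz
      exact Finset.mem_sdiff.mpr ⟨hY₀X hz,
        fun hzC => (Finset.mem_sdiff.mp (hCV hzC)).2 hz⟩
    have hY₀ne : Y₀.Nonempty := by
      rw [← Finset.card_pos, hY₀c]; omega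
    have hsecY := hsec C hCX hCc hPneC Y₀ hYXC hY₀ne (le_of_eq hY₀c)
    rw [hY₀c] at hsecY
    rw [← hpC, ← hsecY]
    congr 2
    rw [Finset.filter_filter, Finset.filter_filter]
    apply Finset.filter_congr
    intro H _
    constructor
    · rintro ⟨h1, h2⟩; exact ⟨h2, h1⟩
    · rintro ⟨h1, h2⟩; exact ⟨h2, h1⟩
  obtain ⟨Cs, hCsV, hCsc⟩ := Finset.exists_subset_card_eq (s := (X \ Y₀)) (n := c) (by omega)
  have hconstB : ∀ C : Finset α, C ⊆ X \ Y₀ → C.card = c →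
      ((𝒜.filter (fun H => Y₀ ⊆ H)).filter fun H => Disjoint H C).card
        = ((𝒜.filter (fun H => Y₀ ⊆ H)).filter fun H => Disjoint H Cs).card := by
    intro C h1 h2
    have e1 := hBfc C h1 h2
    have e2 := hBfc Cs hCsV hCsc
    have hchpos : 0 < (a + b).choose δ := Nat.choose_pos (by omega)
    exact Nat.eq_of_mul_eq_mul_left hchpos (by rw [e1, e2])
  have hVs : (a - δ) + c ≤ (X \ Y₀).card := by omega
  have hcas := cascade (X \ Y₀) (𝒜.filter (fun H => Y₀ ⊆ H)) c (a - δ)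
    ((𝒜.filter (fun H => Y₀ ⊆ H)).filter fun H => Disjoint H Cs).card
    hsize hconstB hVs
  -- Conclusion.
  have hH₁B : H₁ ∈ 𝒜.filter (fun H => Y₀ ⊆ H) := Finset.mem_filter.mpr ⟨hH₁, hY₀sub⟩
  have hH₁V : (H₁ ∩ (X \ Y₀)).card = a - δ := hsize H₁ hH₁B
  obtain ⟨U₀, hU₀sub, hU₀c⟩ := Finset.exists_subset_card_eq (s := (H₁ ∩ (X \ Y₀))) (n := c) (by omega)
  obtain ⟨W, hWsub, hWc⟩ := Finset.exists_subset_card_eq (s := (H₁ ∩ (X \ Y₀))) (n := (c - 1)) (by omega)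
  have hVH₁ : (X \ Y₀) \ H₁ = X \ H₁ := by
    ext z
    simp only [Finset.mem_sdiff]
    constructor
    · rintro ⟨⟨h1, _⟩, h3⟩; exact ⟨h1, h3⟩
    · rintro ⟨h1, h3⟩; exact ⟨⟨h1, fun hz => h3 (hY₀sub hz)⟩, h3⟩
  have hupick : ((X \ Y₀) \ H₁).Nonempty := by
    rw [hVH₁, ← Finset.card_pos, hXH₁]; omega
  obtain ⟨u, hu⟩ := hupick
  have huV : u ∈ X \ Y₀ := (Finset.mem_sdiff.mp hu).1
  have huH₁ : u ∉ H₁ := (Finset.mem_sdiff.mp hu).2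
  have huW : u ∉ W := fun h => huH₁ (Finset.mem_inter.mp (hWsub h)).1
  have hUV : insert u W ⊆ X \ Y₀ :=
    Finset.insert_subset huV (hWsub.trans Finset.inter_subset_right)
  have hUc : (insert u W).card = c := by
    rw [Finset.card_insert_of_notMem huW, hWc]; omega
  have hU₀V : U₀ ⊆ X \ Y₀ := hU₀sub.trans Finset.inter_subset_right
  have heqc := hcas U₀ hU₀V hU₀c (insert u W) hUV hUc
  have hpos0 : 0 < ((𝒜.filter (fun H => Y₀ ⊆ H)).filter fun H => U₀ ⊆ H).card :=
    Finset.card_pos.mpr ⟨H₁, Finset.mem_filter.mpr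
      ⟨hH₁B, hU₀sub.trans Finset.inter_subset_left⟩⟩
  rw [heqc] at hpos0
  obtain ⟨H₂, hH₂⟩ := Finset.card_pos.mp hpos0
  rw [Finset.mem_filter] at hH₂
  have hH₂A : H₂ ∈ 𝒜 := (Finset.mem_filter.mp hH₂.1).1
  have hY₀H₂ : Y₀ ⊆ H₂ := (Finset.mem_filter.mp hH₂.1).2
  have hneq : H₁ ≠ H₂ := fun h => huH₁ (h ▸ hH₂.2 (Finset.mem_insert_self u W))
  have hpair := pair H₁ hH₁ H₂ hH₂A hneq
  have hsubint : Y₀ ∪ W ⊆ H₁ ∩ H₂ :=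
    Finset.union_subset (Finset.subset_inter hY₀sub hY₀H₂)
      (Finset.subset_inter (hWsub.trans Finset.inter_subset_left)
        ((Finset.subset_insert u W).trans hH₂.2))
  have hdisjYW : Disjoint Y₀ W :=
    Finset.disjoint_of_subset_right (hWsub.trans Finset.inter_subset_right)
      Finset.sdiff_disjoint.symm
  have hcardunion : (Y₀ ∪ W).card = δ + (c - 1) := by
    rw [Finset.card_union_of_disjoint hdisjYW, hY₀c, hWc]
  have hfin := Finset.card_le_card hsubint
  rw [hcardunion] at hfin
  omega
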